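/- Let $V$ be a vector space over $\mathbb{Q}$, $n\ge 1$, and let $\lambda_0,\dots,\lambda_{n+1}\in V$ with $\lambda(k)=\sum_{i=0}^{n+1}\binom{k}{i}\lambda_i$, let $p(k)=a_0k^n+a_1k^{n-1}+\cdots+a_n$ with $a_i\in\mathbb{Q}$, $a_0>0$, $\mu=2a_1/a_0$, and $\lambda_{CM}=(\mu+n(n+1))\lambda_{n+1}-2(n+1)\lambda_n$. Define $\lambda_{CH}(r)=p(r)r^{n+1}\,\lambda_{n+1}-a_0(n+1)!\,r^n\,\lambda(r)\in V$. Then there exist elements $\epsilon_0,\dots,\epsilon_{2n-1}\in V$ such that for all integers $r\ge 1$: $\lambda_{CH}(r)=\frac{a_0}{2}\,r^{2n}\,\lambda_{CM}+\sum_{j=0}^{2n-1}r^j\epsilon_j$. -/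

import Mathlib

open Polynomial

private lemma desc_struct (k : ℕ) : ∃ g : ℚ[X],
    descPochhammer ℚ (k + 1)
      = X ^ (k + 1) - C ((k : ℚ) * ((k : ℚ) + 1) / 2) * X ^ k + g
      ∧ g.degree < ((k : ℕ) : WithBot ℕ) := by
  induction k with
  | zero =>
    refine ⟨0, ?_, by simp⟩
    simp [descPochhammer_one]
  | succ k ih =>
    obtain ⟨g, hg, hdeg⟩ := ih
    refine ⟨g * X + C (((k:ℚ)+1) * ((k:ℚ) * ((k:ℚ)+1) / 2)) * X ^ k - C ((k:ℚ)+1) * g,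
      ?_, ?_⟩
    · have h1 : descPochhammer ℚ (k+1+1) = descPochhammer ℚ (k+1) * (X - C ((k:ℚ)+1)) := by
        rw [descPochhammer_succ_right, ← C_eq_natCast]
        norm_num
      rw [h1, hg]
      have h2 : ((k+1 : ℕ) : ℚ) * (((k+1:ℕ):ℚ) + 1) / 2
          = (k:ℚ)*((k:ℚ)+1)/2 + ((k:ℚ)+1) := by push_cast; ring
      push_cast
      rw [show ((k:ℚ)+1) * ((k:ℚ)+1+1)/2 = (k:ℚ)*((k:ℚ)+1)/2 + ((k:ℚ)+1) from by ring]
      simp only [map_add, map_mul, map_one]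
      ring
    · have h1 : (g * X).degree < (((k+1 : ℕ)) : WithBot ℕ) := by
        refine lt_of_le_of_lt (degree_mul_le _ _) ?_
        rw [degree_X]
        calc g.degree + 1 < ((k:ℕ) : WithBot ℕ) + 1 :=
              WithBot.add_lt_add_right (by simp) hdeg
          _ = (((k+1 : ℕ)) : WithBot ℕ) := by push_cast; ring
      have h2 : (C (((k:ℚ)+1) * ((k:ℚ) * ((k:ℚ)+1) / 2)) * X ^ k).degree
          < (((k+1 : ℕ)) : WithBot ℕ) := by
        refine lt_of_le_of_lt (degree_C_mul_X_pow_le _ _) ?_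
        exact_mod_cast Nat.lt_succ_self k
      have h3 : (C ((k:ℚ)+1) * g).degree < (((k+1 : ℕ)) : WithBot ℕ) := by
        rw [← smul_eq_C_mul]
        refine lt_of_le_of_lt (degree_smul_le _ _) (lt_trans hdeg ?_)
        exact_mod_cast Nat.lt_succ_self k
      refine lt_of_le_of_lt (degree_sub_le _ _) (max_lt ?_ h3)
      exact lt_of_le_of_lt (degree_add_le _ _) (max_lt h1 h2)

private lemma deg_lt_helper {g : ℚ[X]} {k m s : ℕ} (h : g.degree < ((k:ℕ) : WithBot ℕ))
    (hks : m + k ≤ s) : (X ^ m * g : ℚ[X]).degree < ((s : ℕ) : WithBot ℕ) := by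
  rcases eq_or_ne g 0 with rfl | hg
  · rw [mul_zero, degree_zero]; exact WithBot.bot_lt_coe s
  · rw [degree_mul, degree_X_pow]
    calc ((m : ℕ) : WithBot ℕ) + g.degree < (m : ℕ) + (k : ℕ) :=
          WithBot.add_lt_add_left (by simp) h
      _ = (((m + k : ℕ)) : WithBot ℕ) := by push_cast; ring
      _ ≤ (s : ℕ) := by exact_mod_cast hks

private lemma natDeg_lt_of_deg_lt {q : ℚ[X]} {m : ℕ} (hm : 0 < m)
    (h : q.degree < ((m : ℕ) : WithBot ℕ)) : q.natDegree < m := by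
  rcases eq_or_ne q 0 with rfl | h0
  · simpa using hm
  · exact (natDegree_lt_iff_degree_lt h0).mpr h

/-- Second step in the proof of Proposition 3.3 of Fine–Ross:
`λ_CH(X, L^r) = λ_CM^{(a₀/2) r^{2n}} ⊗ (terms of order r^{2n-1})`. -/
theorem ch_of_power_expansion
    (V : Type*) [AddCommGroup V] [Module ℚ V]
    (n : ℕ) (hn : 1 ≤ n)
    (lam : ℕ → V)
    (Lam : ℕ → V)
    (hLam : ∀ k : ℕ, Lam k = ∑ i ∈ Finset.range (n + 2), ((k.choose i : ℚ)) • lam i)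
    (a : ℕ → ℚ) (ha0 : 0 < a 0)
    (p : ℕ → ℚ)
    (hp : ∀ k : ℕ, p k = ∑ i ∈ Finset.range (n + 1), a i * (k : ℚ) ^ (n - i))
    (μ : ℚ) (hμ : μ = 2 * a 1 / a 0)
    (lamCM : V)
    (hCM : lamCM = (μ + n * (n + 1)) • lam (n + 1) - ((2 * (n + 1) : ℚ)) • lam n)
    (lamCH : ℕ → V)
    (hCH : ∀ r : ℕ, lamCH r
      = (p r * (r : ℚ) ^ (n + 1)) • lam (n + 1)
        - (a 0 * (n + 1).factorial * (r : ℚ) ^ n) • Lam r) :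
    ∃ ε : ℕ → V, ∀ r : ℕ, 1 ≤ r →
      lamCH r = (a 0 / 2 * (r : ℚ) ^ (2 * n)) • lamCM
        + ∑ j ∈ Finset.range (2 * n), ((r : ℚ) ^ j) • ε j := by
  classical
  set q : ℕ → ℚ[X] := fun i =>
    -(C (a 0 * (n+1).factorial / i.factorial) * X ^ n * descPochhammer ℚ i)
    + (if i = n + 1 then (∑ j ∈ Finset.range (n+1), C (a j) * X ^ (n - j)) * X ^ (n+1)
          - C (a 0 / 2 * (μ + n*(n+1))) * X ^ (2*n) else 0)
    + (if i = n then C (a 0 * ((n:ℚ)+1)) * X ^ (2*n) else 0) with hq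
  -- evaluation of q
  have hevalP : ∀ r : ℕ,
      Polynomial.eval (r:ℚ) (∑ j ∈ Finset.range (n+1), C (a j) * X ^ (n - j)) = p r := by
    intro r
    rw [hp, Polynomial.eval_finset_sum]
    simp
  have hevald : ∀ r i : ℕ,
      Polynomial.eval (r:ℚ) (descPochhammer ℚ i) = (i.factorial : ℚ) * (r.choose i) := by
    intro r i
    rw [descPochhammer_eval_eq_descFactorial, Nat.descFactorial_eq_factorial_mul_choose]
    push_cast
    ring
  have hevalq : ∀ r i : ℕ, Polynomial.eval (r:ℚ) (q i)
      = -(a 0 * (n+1).factorial * (r:ℚ)^n * (r.choose i))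
        + (if i = n + 1 then p r * (r:ℚ)^(n+1) - a 0 / 2 * (μ + n*(n+1)) * (r:ℚ)^(2*n) else 0)
        + (if i = n then a 0 * ((n:ℚ)+1) * (r:ℚ)^(2*n) else 0) := by
    intro r i
    have hfact : ((i.factorial : ℚ)) ≠ 0 := Nat.cast_ne_zero.mpr i.factorial_ne_zero
    simp only [hq]
    split_ifs with h1 h2 <;>
      simp only [eval_add, eval_neg, eval_mul, eval_pow, eval_C, eval_X, eval_sub, eval_zero,
        hevalP, hevald] <;>
      field_simp <;> ring
  -- degree bounds
  have hdeg : ∀ i, i < n + 2 → (q i).natDegree < 2 * n := by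
    have h2n : 0 < 2 * n := by omega
    intro i hi
    refine natDeg_lt_of_deg_lt h2n ?_
    rcases lt_trichotomy i n with hlt | heq | hgt
    · -- i < n
      have hqi : q i = -(C (a 0 * (n+1).factorial / i.factorial) * X ^ n
          * descPochhammer ℚ i) := by
        simp only [hq]
        rw [if_neg (by omega), if_neg (by omega), add_zero, add_zero]
      have hdesc : (descPochhammer ℚ i).degree < (((i+1 : ℕ)) : WithBot ℕ) := by
        refine lt_of_le_of_lt (degree_le_natDegree) ?_
        rw [descPochhammer_natDegree]
        exact_mod_cast Nat.lt_succ_self i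
      rw [hqi, degree_neg, mul_assoc, ← smul_eq_C_mul]
      exact lt_of_le_of_lt (degree_smul_le _ _)
        (deg_lt_helper hdesc (by omega : n + (i+1) ≤ 2*n))
    · -- i = n
      subst heq
      obtain ⟨g0, hg0, hg0d⟩ := desc_struct (i - 1)
      rw [show i - 1 + 1 = i by omega] at hg0
      have hfacn : (a 0 * (((i+1).factorial : ℕ) : ℚ) / ((i.factorial : ℕ) : ℚ))
          = a 0 * ((i:ℚ)+1) := by
        rw [Nat.factorial_succ]
        push_cast
        have : ((i.factorial : ℕ) : ℚ) ≠ 0 := Nat.cast_ne_zero.mpr i.factorial_ne_zero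
        field_simp
      have hqn : q i = C (a 0 * ((i:ℚ)+1)) *
          (C (((i-1:ℕ):ℚ) * (((i-1:ℕ):ℚ)+1)/2) * X ^ (i + (i-1)) - X ^ i * g0) := by
        simp only [hq]
        rw [if_neg (by omega), if_pos (by trivial), add_zero, hfacn, hg0]
        rw [show (2*i) = i + i by ring]
        ring
      rw [hqn, ← smul_eq_C_mul]
      refine lt_of_le_of_lt (degree_smul_le _ _) ?_
      refine lt_of_le_of_lt (degree_sub_le _ _) (max_lt ?_ ?_)
      · exact lt_of_le_of_lt (degree_C_mul_X_pow_le _ _)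
          (by exact_mod_cast (by omega : i + (i-1) < 2*i))
      · exact deg_lt_helper hg0d (by omega : i + (i-1) ≤ 2*i)
    · -- i = n + 1
      have hi1 : i = n + 1 := by omega
      subst hi1
      obtain ⟨g1, hg1, hg1d⟩ := desc_struct n
      have hfac : a 0 * (((n+1).factorial : ℕ) : ℚ) / (((n+1).factorial : ℕ) : ℚ) = a 0 := by
        have : (((n+1).factorial : ℕ) : ℚ) ≠ 0 := Nat.cast_ne_zero.mpr (n+1).factorial_ne_zero
        field_simp
      have hconst : a 0 / 2 * (μ + (n:ℚ) * ((n:ℚ)+1))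
          = a 1 + a 0 * ((n:ℚ) * ((n:ℚ)+1) / 2) := by
        rw [hμ]
        field_simp
      have e1 : (C (a 0) * X ^ n) * X ^ (n+1) = C (a 0) * (X : ℚ[X]) ^ (2*n+1) := by
        rw [mul_assoc, ← pow_add, show n+(n+1)=2*n+1 by omega]
      have e2 : (C (a 1) * X ^ (n-1)) * X ^ (n+1) = C (a 1) * (X : ℚ[X]) ^ (2*n) := by
        rw [mul_assoc, ← pow_add, show (n-1)+(n+1)=2*n by omega]
      have hPX : (∑ j ∈ Finset.range (n+1), C (a j) * X ^ (n - j)) * X ^ (n+1)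
          = C (a 0) * (X : ℚ[X]) ^ (2*n+1) + C (a 1) * X ^ (2*n)
            + (∑ j ∈ Finset.Ico 2 (n+1), C (a j) * X ^ (n - j)) * X ^ (n+1) := by
        rw [Finset.range_eq_Ico, Finset.sum_eq_sum_Ico_succ_bot (by omega),
          Finset.sum_eq_sum_Ico_succ_bot (by omega), Nat.sub_zero, add_mul, add_mul, e1, e2]
        ring
      have hqn1 : q (n+1) = (∑ j ∈ Finset.Ico 2 (n+1), C (a j) * X ^ (n - j)) * X ^ (n+1)
          - C (a 0) * (X ^ n * g1) := by
        simp only [hq]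
        rw [if_neg (show ¬ (n + 1 = n) by omega), add_zero, if_pos (by trivial), hfac, hg1,
          hconst, map_add, map_mul, ← mul_assoc, hPX]
        ring
      rw [hqn1]
      refine lt_of_le_of_lt (degree_sub_le _ _) (max_lt ?_ ?_)
      · have htail : (∑ j ∈ Finset.Ico 2 (n+1), C (a j) * X ^ (n - j)).degree
            < (((n-1 : ℕ)) : WithBot ℕ) := by
          refine lt_of_le_of_lt (degree_sum_le _ _) ?_
          rw [Finset.sup_lt_iff (WithBot.bot_lt_coe _)]
          intro j hj
          have hj' := Finset.mem_Ico.mp hj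
          refine lt_of_le_of_lt (degree_C_mul_X_pow_le _ _) ?_
          exact_mod_cast (by omega : n - j < n - 1)
        calc ((∑ j ∈ Finset.Ico 2 (n+1), C (a j) * X ^ (n - j)) * X ^ (n+1)).degree
            ≤ (∑ j ∈ Finset.Ico 2 (n+1), C (a j) * X ^ (n - j)).degree
              + (((n+1 : ℕ)) : WithBot ℕ) := by
              simpa [degree_X_pow] using degree_mul_le
                (∑ j ∈ Finset.Ico 2 (n+1), C (a j) * X ^ (n - j)) ((X : ℚ[X]) ^ (n+1))
          _ < (((n-1 : ℕ)) : WithBot ℕ) + (((n+1 : ℕ)) : WithBot ℕ) :=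
              WithBot.add_lt_add_right (by simp) htail
          _ = (((2*n : ℕ)) : WithBot ℕ) := by
              rw [← Nat.cast_add]
              exact congrArg (fun m : ℕ => ((m : ℕ) : WithBot ℕ)) (by omega)
      · rw [← smul_eq_C_mul]
        exact lt_of_le_of_lt (degree_smul_le _ _)
          (deg_lt_helper hg1d (by omega : n + n ≤ 2*n))
  -- main structural identity
  have hmain : ∀ r : ℕ, lamCH r = (a 0 / 2 * (r:ℚ)^(2*n)) • lamCM
      + ∑ i ∈ Finset.range (n+2), (Polynomial.eval (r:ℚ) (q i)) • lam i := by
    intro r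
    have hS : (a 0 * (((n+1).factorial : ℕ) : ℚ) * (r:ℚ)^n)
          • (∑ i ∈ Finset.range (n+2), ((r.choose i : ℚ)) • lam i)
        = ∑ i ∈ Finset.range (n+2),
            (a 0 * (((n+1).factorial : ℕ) : ℚ) * (r:ℚ)^n * (r.choose i)) • lam i := by
      rw [Finset.smul_sum]
      exact Finset.sum_congr rfl fun i _ => (smul_smul _ _ _)
    rw [hCH, hLam r, hCM, hS]
    simp only [hevalq, add_smul, ite_smul, zero_smul, neg_smul]
    rw [Finset.sum_add_distrib, Finset.sum_add_distrib,
      Finset.sum_ite_eq' (Finset.range (n+2)) (n+1), Finset.sum_ite_eq' (Finset.range (n+2)) n,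
      if_pos (Finset.mem_range.mpr (by omega)), if_pos (Finset.mem_range.mpr (by omega)),
      Finset.sum_neg_distrib]
    module
  refine ⟨fun j => ∑ i ∈ Finset.range (n+2), ((q i).coeff j) • lam i, ?_⟩
  intro r hr
  rw [hmain r]
  congr 1
  have hsum : ∀ i ∈ Finset.range (n+2), (Polynomial.eval (r:ℚ) (q i)) • lam i
      = ∑ j ∈ Finset.range (2*n), ((r:ℚ)^j) • (((q i).coeff j) • lam i) := by
    intro i hi
    rw [Polynomial.eval_eq_sum_range' (hdeg i (Finset.mem_range.mp hi)), Finset.sum_smul]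
    refine Finset.sum_congr rfl fun j _ => ?_
    rw [mul_comm, ← smul_smul]
  rw [Finset.sum_congr rfl hsum, Finset.sum_comm]
  exact Finset.sum_congr rfl fun j _ => (Finset.smul_sum).symm
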